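/- arXiv:1712.01647 — 6 statements merged into one kernel-verified Lean document; each statement's English description precedes it below -/
import Mathlib

section
/- Let A be a real square matrix that is a weakly diagonally dominant Z-matrix with nonnegative diagonal entries. Then the following are equivalent: (i) A is a nonsingular M-matrix, i.e., A is nonsingular and every entry of A⁻¹ is nonnegative; (ii) A is nonsingular; (iii) A is weakly chained diagonally dominant. -/
open Finset

/-- Row `i` of `A` is strictly diagonally dominant (SDD). -/
def SDDRow {n : ℕ} (A : Matrix (Fin n) (Fin n) ℝ) (i : Fin n) : Prop :=
  ∑ j ∈ Finset.univ.erase i, |A i j| < |A i i|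

/-- `A` is weakly diagonally dominant (WDD): every row is WDD. -/
def WDD {n : ℕ} (A : Matrix (Fin n) (Fin n) ℝ) : Prop :=
  ∀ i, ∑ j ∈ Finset.univ.erase i, |A i j| ≤ |A i i|

/-- `A` is a Z-matrix: nonpositive off-diagonal entries. -/
def ZMat {n : ℕ} (A : Matrix (Fin n) (Fin n) ℝ) : Prop :=
  ∀ i j, i ≠ j → A i j ≤ 0

/-- `A` is weakly chained diagonally dominant (WCDD): `A` is WDD and from every row that is
not SDD there is a walk in the adjacency graph of `A` (an edge from `k` to `l` whenever
`A k l ≠ 0`) to some SDD row. -/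
def WCDD {n : ℕ} (A : Matrix (Fin n) (Fin n) ℝ) : Prop :=
  WDD A ∧ ∀ i, ¬ SDDRow A i →
    ∃ j, Relation.ReflTransGen (fun k l => A k l ≠ 0) i j ∧ SDDRow A j

open Matrix in
/-- Monotonicity: for a WCDD Z-matrix with nonnegative diagonal, `A x ≥ 0` implies `x ≥ 0`. -/
lemma key_mono {n : ℕ} (A : Matrix (Fin n) (Fin n) ℝ)
    (hZ : ZMat A) (hdiag : ∀ i, 0 ≤ A i i) (hC : WCDD A)
    (x : Fin n → ℝ) (hx : ∀ i, 0 ≤ A.mulVec x i) : ∀ i, 0 ≤ x i := by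
  by_contra hcon
  push_neg at hcon
  obtain ⟨i₁, hi₁⟩ := hcon
  obtain ⟨i₀, -, hmin⟩ := Finset.exists_min_image Finset.univ x ⟨i₁, Finset.mem_univ i₁⟩
  have hmin : ∀ a, x i₀ ≤ x a := fun a => hmin a (mem_univ a)
  have hneg : x i₀ < 0 := lt_of_le_of_lt (hmin i₁) hi₁
  have hpos : 0 < -x i₀ := by linarith
  have hkey : ∀ i, x i = x i₀ → ¬ SDDRow A i ∧ ∀ j, A i j ≠ 0 → x j = x i₀ := by
    intro i hxi
    set S := ∑ j ∈ Finset.univ.erase i, |A i j| with hS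
    have h1 : ∀ j ∈ Finset.univ.erase i, A i j * x j ≤ |A i j| * (-x i₀) := by
      intro j hj
      have hji : j ≠ i := Finset.ne_of_mem_erase hj
      have hz : A i j ≤ 0 := hZ i j hji.symm
      calc A i j * x j ≤ A i j * x i₀ := mul_le_mul_of_nonpos_left (hmin j) hz
        _ = (-A i j) * (-x i₀) := by ring
        _ = |A i j| * (-x i₀) := by rw [abs_of_nonpos hz]
    have hBle : (∑ j ∈ Finset.univ.erase i, A i j * x j) ≤ S * (-x i₀) := by
      rw [hS, Finset.sum_mul]
      exact Finset.sum_le_sum h1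
    have hxi' : (0:ℝ) ≤ ∑ j, A i j * x j := by
      have := hx i
      simpa [Matrix.mulVec, dotProduct] using this
    have hsplit : ∑ j, A i j * x j
        = A i i * x i + ∑ j ∈ Finset.univ.erase i, A i j * x j :=
      (Finset.add_sum_erase _ _ (mem_univ i)).symm
    have hWi : S ≤ A i i := by
      have := hC.1 i
      rwa [abs_of_nonneg (hdiag i)] at this
    have hax : (0:ℝ) ≤ A i i * x i₀ + ∑ j ∈ Finset.univ.erase i, A i j * x j := by
      rw [hsplit, hxi] at hxi'
      exact hxi'
    have hge : A i i ≤ S := by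
      have h3 : A i i * (-x i₀) ≤ S * (-x i₀) := by linarith
      exact le_of_mul_le_mul_right h3 hpos
    have hSeq : S = A i i := le_antisymm hWi hge
    have hnotsdd : ¬ SDDRow A i := by
      intro h
      unfold SDDRow at h
      rw [abs_of_nonneg (hdiag i), ← hS] at h
      linarith
    refine ⟨hnotsdd, ?_⟩
    have hBeq : (∑ j ∈ Finset.univ.erase i, A i j * x j) = S * (-x i₀) := by
      refine le_antisymm hBle ?_
      rw [hSeq]
      linarith
    have h0 : ∑ j ∈ Finset.univ.erase i, (|A i j| * (-x i₀) - A i j * x j) = 0 := by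
      rw [Finset.sum_sub_distrib, ← Finset.sum_mul, ← hS, hBeq, sub_self]
    have hterm : ∀ j ∈ Finset.univ.erase i, |A i j| * (-x i₀) - A i j * x j = 0 :=
      (Finset.sum_eq_zero_iff_of_nonneg (fun j hj => sub_nonneg.mpr (h1 j hj))).mp h0
    intro j hAij
    by_cases hji : j = i
    · rw [hji]; exact hxi
    · have hj : j ∈ Finset.univ.erase i := Finset.mem_erase.mpr ⟨hji, mem_univ j⟩
      have ht := hterm j hj
      have hz : A i j ≤ 0 := hZ i j (Ne.symm hji)
      rw [abs_of_nonpos hz] at ht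
      have : A i j * x j = A i j * x i₀ := by linarith
      exact mul_left_cancel₀ hAij this
  have hP : ∀ j, Relation.ReflTransGen (fun k l => A k l ≠ 0) i₀ j → x j = x i₀ := by
    intro j h
    induction h with
    | refl => rfl
    | tail hab hbc ih => exact (hkey _ ih).2 _ hbc
  obtain ⟨j, hwalk, hSDD⟩ := hC.2 i₀ (hkey i₀ rfl).1
  exact (hkey j (hP j hwalk)).1 hSDD

open Matrix in
/-- A WCDD Z-matrix with nonnegative diagonal is nonsingular. -/
lemma wcdd_isUnit {n : ℕ} (A : Matrix (Fin n) (Fin n) ℝ)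
    (hZ : ZMat A) (hdiag : ∀ i, 0 ≤ A i i) (hC : WCDD A) : IsUnit A.det := by
  rw [isUnit_iff_ne_zero]
  intro hdet
  obtain ⟨v, hv, hAv⟩ := (Matrix.exists_mulVec_eq_zero_iff).mpr hdet
  have h1 : ∀ i, 0 ≤ v i :=
    key_mono A hZ hdiag hC v (fun i => by rw [hAv]; exact le_refl 0)
  have h2 : ∀ i, 0 ≤ -v i :=
    key_mono A hZ hdiag hC (-v) (fun i => by rw [Matrix.mulVec_neg, hAv]; simp)
  refine hv (funext fun i => ?_)
  have ha := h1 i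
  have hb := h2 i
  have : v i = 0 := by linarith
  simpa using this

open Matrix in
/-- A WDD Z-matrix with nonnegative diagonal that is not WCDD is singular. -/
lemma not_wcdd_det_zero {n : ℕ} (A : Matrix (Fin n) (Fin n) ℝ) (hZ : ZMat A) (hW : WDD A)
    (hdiag : ∀ i, 0 ≤ A i i) (h : ¬ WCDD A) : A.det = 0 := by
  classical
  have h2 : ¬ ∀ i, ¬ SDDRow A i →
      ∃ j, Relation.ReflTransGen (fun k l => A k l ≠ 0) i j ∧ SDDRow A j :=
    fun hx => h ⟨hW, hx⟩
  push_neg at h2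
  obtain ⟨i, hiSDD, hno⟩ := h2
  set Sset : Finset (Fin n) :=
    Finset.univ.filter (fun j => Relation.ReflTransGen (fun k l => A k l ≠ 0) i j) with hSdef
  have hiS : i ∈ Sset := by
    simp only [hSdef, mem_filter, mem_univ, true_and]
    exact Relation.ReflTransGen.refl
  have hclosed : ∀ j ∈ Sset, ∀ k, A j k ≠ 0 → k ∈ Sset := by
    intro j hj k hk
    simp only [hSdef, mem_filter, mem_univ, true_and] at hj ⊢
    exact hj.tail hk
  have hnotsdd : ∀ j ∈ Sset, ¬ SDDRow A j := by
    intro j hj hsdd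
    simp only [hSdef, mem_filter, mem_univ, true_and] at hj
    exact hno j hj hsdd
  have hrow0 : ∀ j ∈ Sset, ∀ k, k ∉ Sset → A j k = 0 := by
    intro j hj k hk
    by_contra hne
    exact hk (hclosed j hj k hne)
  have hrowsum : ∀ j ∈ Sset, ∑ k ∈ Sset, A j k = 0 := by
    intro j hj
    have hfull : ∑ k ∈ Sset, A j k = ∑ k, A j k :=
      Finset.sum_subset (Finset.subset_univ _) (fun k _ hk => hrow0 j hj k hk)
    have h1 := hW j
    rw [abs_of_nonneg (hdiag j)] at h1
    have h2 : ¬ SDDRow A j := hnotsdd j hj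
    unfold SDDRow at h2
    rw [abs_of_nonneg (hdiag j)] at h2
    push_neg at h2
    have heq : ∑ k ∈ Finset.univ.erase j, |A j k| = A j j := le_antisymm h1 h2
    have hsplit : ∑ k, A j k = A j j + ∑ k ∈ Finset.univ.erase j, A j k :=
      (Finset.add_sum_erase _ _ (mem_univ j)).symm
    have habs : ∑ k ∈ Finset.univ.erase j, A j k
        = -∑ k ∈ Finset.univ.erase j, |A j k| := by
      rw [← Finset.sum_neg_distrib]
      apply Finset.sum_congr rfl
      intro k hk
      rw [abs_of_nonpos (hZ j k (Ne.symm (Finset.ne_of_mem_erase hk)))]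
      ring
    linarith [hfull, hsplit, habs, heq]
  set B : Matrix {x // x ∈ Sset} {x // x ∈ Sset} ℝ :=
    Matrix.of (fun a b => A a.1 b.1) with hBdef
  have hB1 : B.mulVec (fun _ => (1:ℝ)) = 0 := by
    funext a
    have he : (B.mulVec fun _ => (1:ℝ)) a = ∑ b : {x // x ∈ Sset}, A a.1 b.1 := by
      simp [Matrix.mulVec, dotProduct, hBdef]
    rw [he, Finset.sum_coe_sort Sset (fun k => A a.1 k), hrowsum a.1 a.2]
    rfl
  have hdetB : B.det = 0 := by
    have hne : (fun _ : {x // x ∈ Sset} => (1:ℝ)) ≠ 0 := by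
      intro hh
      have := congrFun hh ⟨i, hiS⟩
      simp at this
    exact Matrix.exists_mulVec_eq_zero_iff.mp ⟨_, hne, hB1⟩
  have hdetBT : Bᵀ.det = 0 := by rw [Matrix.det_transpose]; exact hdetB
  obtain ⟨c, hc, hBc⟩ := Matrix.exists_mulVec_eq_zero_iff.mpr hdetBT
  set y : Fin n → ℝ := fun k => if h : k ∈ Sset then c ⟨k, h⟩ else 0 with hy
  have hyc : ∀ a : {x // x ∈ Sset}, y a.1 = c a := by
    intro a
    simp only [hy]
    rw [dif_pos a.2]
  have hAty : Aᵀ.mulVec y = 0 := by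
    funext j
    have hexp : Aᵀ.mulVec y j = ∑ k, A k j * y k := by
      simp [Matrix.mulVec, dotProduct, Matrix.transpose_apply]
    have hsub : ∑ k ∈ Sset, A k j * y k = ∑ k, A k j * y k :=
      Finset.sum_subset (Finset.subset_univ _)
        (fun k _ hk => by simp only [hy]; rw [dif_neg hk]; ring)
    rw [Pi.zero_apply, hexp, ← hsub, ← Finset.sum_coe_sort Sset (fun k => A k j * y k)]
    by_cases hj : j ∈ Sset
    · calc ∑ a : {x // x ∈ Sset}, A a.1 j * y a.1
          = ∑ a : {x // x ∈ Sset}, Bᵀ ⟨j, hj⟩ a * c a := by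
            apply Finset.sum_congr rfl
            intro a _
            rw [hyc a]
            simp [hBdef, Matrix.transpose_apply]
        _ = Bᵀ.mulVec c ⟨j, hj⟩ := by simp [Matrix.mulVec, dotProduct]
        _ = 0 := by rw [hBc]; rfl
    · apply Finset.sum_eq_zero
      intro a _
      rw [hrow0 a.1 a.2 j hj]
      ring
  have hyne : y ≠ 0 := by
    obtain ⟨a, ha⟩ := Function.ne_iff.mp hc
    intro hh
    apply ha
    have := congrFun hh a.1
    rw [hyc a] at this
    simpa using this
  have hT : Aᵀ.det = 0 := Matrix.exists_mulVec_eq_zero_iff.mp ⟨y, hyne, hAty⟩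
  rw [← Matrix.det_transpose]
  exact hT

/-- For a WDD Z-matrix with nonnegative diagonal entries, the following are equivalent:
(i) `A` is a nonsingular M-matrix (nonsingular with entrywise nonnegative inverse);
(ii) `A` is nonsingular; (iii) `A` is WCDD. -/
theorem wdd_z_matrix_M_iff_nonsingular_iff_wcdd {n : ℕ} (A : Matrix (Fin n) (Fin n) ℝ)
    (hZ : ZMat A) (hW : WDD A) (hdiag : ∀ i, 0 ≤ A i i) :
    ((IsUnit A.det ∧ ∀ i j, 0 ≤ A⁻¹ i j) ↔ IsUnit A.det) ∧
      (IsUnit A.det ↔ WCDD A) := by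
  have hiff : IsUnit A.det ↔ WCDD A := by
    constructor
    · intro h
      by_contra hC
      exact (isUnit_iff_ne_zero.mp h) (not_wcdd_det_zero A hZ hW hdiag hC)
    · exact wcdd_isUnit A hZ hdiag
  refine ⟨⟨fun h => h.1, fun h => ⟨h, ?_⟩⟩, hiff⟩
  intro i j
  have hC := hiff.mp h
  have hAinv : A * A⁻¹ = 1 := Matrix.mul_nonsing_inv A h
  have hx : ∀ k, 0 ≤ A.mulVec (fun l => A⁻¹ l j) k := by
    intro k
    have he : A.mulVec (fun l => A⁻¹ l j) k = (A * A⁻¹) k j := by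
      simp [Matrix.mulVec, dotProduct, Matrix.mul_apply]
    rw [he, hAinv, Matrix.one_apply]
    split <;> norm_num
  exact key_mono A hZ hdiag hC _ hx i
end

section
/- Assume (H1), (H2), and that A(P) is monotone for every P ∈ 𝒫. Then the ε-policy-iteration sequence (Uℓ)_{ℓ≥1} is well defined (each A(Pℓ) is nonsingular) and converges to a vector U ∈ ℝⁿ which is a solution of the Bellman problem sup_{P∈𝒫}{−A(P)U + y(P)} = 0; moreover this solution is unique. -/
open Filter Topology

/-- Row-decoupled data: the `i`-th row of `A P` and the `i`-th entry of `y P` depend only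
on the `i`-th coordinate of the control `P`. -/
def RowDecoupled {n : ℕ} {P : Fin n → Type*}
    (A : (∀ i, P i) → Matrix (Fin n) (Fin n) ℝ)
    (y : (∀ i, P i) → (Fin n → ℝ)) : Prop :=
  ∀ p q : ∀ i, P i, ∀ i, p i = q i →
    (∀ j, A p i j = A q i j) ∧ y p i = y q i

/-- `U` solves the Bellman problem `sup_{P∈𝒫} {−A(P)U + y(P)} = 0`: for every row `i`,
`0` is the least upper bound of `{[−A(P)U + y(P)]ᵢ : P ∈ 𝒫}`. -/
def IsBellmanSol {n : ℕ} {P : Fin n → Type*}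
    (A : (∀ i, P i) → Matrix (Fin n) (Fin n) ℝ)
    (y : (∀ i, P i) → (Fin n → ℝ)) (U : Fin n → ℝ) : Prop :=
  ∀ i, IsLUB (Set.range fun p => y p i - (A p).mulVec U i) 0

/-- A real square matrix is monotone if it is nonsingular with entrywise nonnegative
inverse. -/
def MatMono {n : ℕ} (M : Matrix (Fin n) (Fin n) ℝ) : Prop :=
  IsUnit M.det ∧ ∀ i j, 0 ≤ M⁻¹ i j

/-- (H1): `P ↦ A(P)⁻¹` is bounded on the set of controls with nonsingular matrix. -/
def H1 {n : ℕ} {P : Fin n → Type*}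
    (A : (∀ i, P i) → Matrix (Fin n) (Fin n) ℝ) : Prop :=
  ∃ C, ∀ p, IsUnit (A p).det → ∀ i j, |(A p)⁻¹ i j| ≤ C

/-- (H2): `A` and `y` are bounded. -/
def H2 {n : ℕ} {P : Fin n → Type*}
    (A : (∀ i, P i) → Matrix (Fin n) (Fin n) ℝ)
    (y : (∀ i, P i) → (Fin n → ℝ)) : Prop :=
  ∃ C, ∀ p, (∀ i j, |A p i j| ≤ C) ∧ ∀ i, |y p i| ≤ C

lemma keyLB {n : ℕ} (M : Matrix (Fin n) (Fin n) ℝ) (hM : MatMono M)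
    (C δ : ℝ) (hC : ∀ i j, |M⁻¹ i j| ≤ C) (hδ : 0 ≤ δ) (w : Fin n → ℝ)
    (hw : ∀ i, -δ ≤ M.mulVec w i) : ∀ i, -((n : ℝ) * C * δ) ≤ w i := by
  intro i
  have hinv : M⁻¹.mulVec (M.mulVec w) = w := by
    rw [Matrix.mulVec_mulVec, Matrix.nonsing_inv_mul M hM.1, Matrix.one_mulVec]
  have hwi : w i = ∑ j, M⁻¹ i j * M.mulVec w j := by
    conv_lhs => rw [← hinv]
    simp [Matrix.mulVec, dotProduct]
  calc -((n : ℝ) * C * δ) = ∑ _j : Fin n, -(C * δ) := by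
        simp [Finset.sum_const]; ring
    _ ≤ ∑ j, M⁻¹ i j * M.mulVec w j := by
        apply Finset.sum_le_sum
        intro j _
        have h1 : M⁻¹ i j * (-δ) ≤ M⁻¹ i j * M.mulVec w j :=
          mul_le_mul_of_nonneg_left (hw j) (hM.2 i j)
        have h2 : M⁻¹ i j ≤ C := (abs_le.mp (hC i j)).2
        nlinarith [hM.2 i j]
    _ = w i := hwi.symm

/-- Under (H1), (H2) and monotonicity of every `A(P)`, the ε-policy-iteration sequence is
well defined (each `A(Pℓ)` is nonsingular) and converges to the unique solution of the
Bellman problem. Here `U (ℓ+1)` solves `A(Pc ℓ) U(ℓ+1) = y(Pc ℓ)` where the control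
`Pc ℓ` is an `ε ℓ`-approximate maximizer for the iterate `U ℓ`, the `ε ℓ` being positive
and summable. -/
theorem eps_policy_iteration_converges
    {n : ℕ} (hn : 1 ≤ n) {P : Fin n → Type*} [∀ i, Nonempty (P i)]
    (A : (∀ i, P i) → Matrix (Fin n) (Fin n) ℝ) (y : (∀ i, P i) → Fin n → ℝ)
    (hrd : RowDecoupled A y) (h1 : H1 A) (h2 : H2 A y)
    (hmono : ∀ p, MatMono (A p))
    (U : ℕ → Fin n → ℝ) (ε : ℕ → ℝ) (Pc : ℕ → ∀ i, P i)
    (hε : ∀ ℓ, 0 < ε ℓ) (hsum : Summable ε)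
    (happrox : ∀ (ℓ : ℕ) (i : Fin n) (p : ∀ i, P i),
      y p i - (A p).mulVec (U ℓ) i ≤ y (Pc ℓ) i - (A (Pc ℓ)).mulVec (U ℓ) i + ε ℓ)
    (hsolve : ∀ ℓ, (A (Pc ℓ)).mulVec (U (ℓ + 1)) = y (Pc ℓ)) :
    (∀ ℓ, IsUnit (A (Pc ℓ)).det) ∧
      ∃ Ustar : Fin n → ℝ, Tendsto U atTop (𝓝 Ustar) ∧
        IsBellmanSol A y Ustar ∧ ∀ V, IsBellmanSol A y V → V = Ustar := by
  obtain ⟨C1, hC1⟩ := h1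
  obtain ⟨C2, hC2⟩ := h2
  have i0 : Fin n := ⟨0, hn⟩
  have p0 : ∀ i, P i := Classical.arbitrary _
  have hC1nn : 0 ≤ C1 := le_trans (abs_nonneg _) (hC1 p0 (hmono p0).1 i0 i0)
  have hC2nn : 0 ≤ C2 := le_trans (abs_nonneg _) ((hC2 p0).2 i0)
  have hεnn : ∀ k, 0 ≤ ε k := fun k => (hε k).le
  set K : ℝ := (n : ℝ) * C1 with hK
  have hKnn : 0 ≤ K := mul_nonneg (Nat.cast_nonneg n) hC1nn
  -- step lower bound
  have hstep : ∀ m (i : Fin n), -(K * ε (m+1)) ≤ U (m+2) i - U (m+1) i := by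
    intro m
    have h0 : ∀ i, -(ε (m+1)) ≤ (A (Pc (m+1))).mulVec (U (m+2) - U (m+1)) i := by
      intro i
      have ha := happrox (m+1) i (Pc m)
      rw [hsolve m] at ha
      have h2 : (A (Pc (m+1))).mulVec (U (m+2)) i = y (Pc (m+1)) i := by
        rw [hsolve (m+1)]
      rw [Matrix.mulVec_sub, Pi.sub_apply]
      linarith
    have hkl := keyLB (A (Pc (m+1))) (hmono _) C1 (ε (m+1))
      (hC1 _ (hmono _).1) (hεnn _) _ h0
    intro i
    have hi := hkl i
    rw [Pi.sub_apply] at hi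
    have hke : K * ε (m+1) = (n : ℝ) * C1 * ε (m+1) := by rw [hK]
    linarith
  -- boundedness of iterates
  have hinvU : ∀ m, (A (Pc m))⁻¹.mulVec (y (Pc m)) = U (m+1) := by
    intro m
    rw [← hsolve m, Matrix.mulVec_mulVec, Matrix.nonsing_inv_mul _ (hmono _).1,
      Matrix.one_mulVec]
  have hbound : ∀ m (i : Fin n), |U (m+1) i| ≤ (n : ℝ) * (C1 * C2) := by
    intro m i
    rw [← hinvU m]
    calc |((A (Pc m))⁻¹.mulVec (y (Pc m))) i|
        = |∑ j, (A (Pc m))⁻¹ i j * y (Pc m) j| := by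
          simp [Matrix.mulVec, dotProduct]
      _ ≤ ∑ j, |(A (Pc m))⁻¹ i j * y (Pc m) j| := Finset.abs_sum_le_sum_abs _ _
      _ ≤ ∑ _j : Fin n, C1 * C2 := by
          apply Finset.sum_le_sum
          intro j _
          rw [abs_mul]
          exact mul_le_mul (hC1 _ (hmono _).1 i j) ((hC2 _).2 j) (abs_nonneg _) hC1nn
      _ = (n : ℝ) * (C1 * C2) := by simp [Finset.sum_const, mul_comm]
  -- convergence of the partial sums of ε
  have hStend : Tendsto (fun t => ∑ k ∈ Finset.range t, ε k) atTop (𝓝 (∑' k, ε k)) :=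
    hsum.hasSum.tendsto_sum_nat
  -- coordinatewise convergence
  have hconv : ∀ i : Fin n, ∃ L : ℝ, Tendsto (fun ℓ => U ℓ i) atTop (𝓝 L) := by
    intro i
    set f : ℕ → ℝ := fun m => U (m+1) i + K * ∑ k ∈ Finset.range (m+1), ε k with hf
    have hfmono : Monotone f := by
      apply monotone_nat_of_le_succ
      intro m
      have h1 := hstep m i
      have h2 : ∑ k ∈ Finset.range (m+2), ε k
          = (∑ k ∈ Finset.range (m+1), ε k) + ε (m+1) := Finset.sum_range_succ _ _
      have h3 := mul_add K (∑ k ∈ Finset.range (m+1), ε k) (ε (m+1))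
      simp only [hf]
      rw [h2]
      linarith
    have hbdd : BddAbove (Set.range f) := by
      refine ⟨(n : ℝ) * (C1 * C2) + K * ∑' k, ε k, ?_⟩
      rintro x ⟨m, rfl⟩
      have hb := (abs_le.mp (hbound m i)).2
      have hs : ∑ k ∈ Finset.range (m+1), ε k ≤ ∑' k, ε k :=
        Summable.sum_le_tsum (Finset.range (m+1)) (fun k _ => hεnn k) hsum
      have := mul_le_mul_of_nonneg_left hs hKnn
      simp only [hf]
      linarith
    have hftend : Tendsto f atTop (𝓝 (⨆ m, f m)) := tendsto_atTop_ciSup hfmono hbdd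
    have hstend2 : Tendsto (fun m => ∑ k ∈ Finset.range (m+1), ε k) atTop
        (𝓝 (∑' k, ε k)) := hStend.comp (tendsto_add_atTop_nat 1)
    have hUt : Tendsto (fun m => U (m+1) i) atTop
        (𝓝 ((⨆ m, f m) - K * ∑' k, ε k)) := by
      have := hftend.sub (hstend2.const_mul K)
      simpa [hf, mul_comm] using this
    exact ⟨_, (tendsto_add_atTop_iff_nat 1).1 hUt⟩
  choose L hL using hconv
  have hU : Tendsto U atTop (𝓝 L) := tendsto_pi_nhds.mpr hL
  have hL1 : ∀ j : Fin n, Tendsto (fun ℓ => U (ℓ+1) j) atTop (𝓝 (L j)) :=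
    fun j => (hL j).comp (tendsto_add_atTop_nat 1)
  have hdiff0 : ∀ j : Fin n, Tendsto (fun ℓ => U (ℓ+1) j - U ℓ j) atTop (𝓝 0) := by
    intro j
    have := (hL1 j).sub (hL j)
    simpa using this
  have hAconv : ∀ p (i : Fin n),
      Tendsto (fun ℓ => (A p).mulVec (U ℓ) i) atTop (𝓝 ((A p).mulVec L i)) := by
    intro p i
    simp only [Matrix.mulVec, dotProduct]
    exact tendsto_finset_sum _ fun j _ => ((hL j).const_mul _)
  -- row expansions of mulVec differences
  have hmvdiff : ∀ (M : Matrix (Fin n) (Fin n) ℝ) (v w : Fin n → ℝ) (i : Fin n),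
      M.mulVec v i - M.mulVec w i = ∑ j, M i j * (v j - w j) := by
    intro M v w i
    simp [Matrix.mulVec, dotProduct, mul_sub, Finset.sum_sub_distrib]
  -- upper bound for the limit
  have hub : ∀ p (i : Fin n), y p i - (A p).mulVec L i ≤ 0 := by
    intro p i
    have hle : ∀ ℓ, y p i - (A p).mulVec (U ℓ) i
        ≤ C2 * ∑ j, |U (ℓ+1) j - U ℓ j| + ε ℓ := by
      intro ℓ
      have ha := happrox ℓ i p
      have h2 : y (Pc ℓ) i = (A (Pc ℓ)).mulVec (U (ℓ+1)) i := by rw [hsolve ℓ]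
      rw [h2] at ha
      have h3 : (A (Pc ℓ)).mulVec (U (ℓ+1)) i - (A (Pc ℓ)).mulVec (U ℓ) i
          ≤ C2 * ∑ j, |U (ℓ+1) j - U ℓ j| := by
        rw [hmvdiff, Finset.mul_sum]
        apply Finset.sum_le_sum
        intro j _
        calc A (Pc ℓ) i j * (U (ℓ+1) j - U ℓ j)
            ≤ |A (Pc ℓ) i j * (U (ℓ+1) j - U ℓ j)| := le_abs_self _
          _ = |A (Pc ℓ) i j| * |U (ℓ+1) j - U ℓ j| := abs_mul _ _
          _ ≤ C2 * |U (ℓ+1) j - U ℓ j| :=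
              mul_le_mul_of_nonneg_right ((hC2 _).1 i j) (abs_nonneg _)
      linarith
    have hgt : Tendsto (fun ℓ => C2 * ∑ j, |U (ℓ+1) j - U ℓ j| + ε ℓ) atTop (𝓝 0) := by
      have h1 : Tendsto (fun ℓ => ∑ j, |U (ℓ+1) j - U ℓ j|) atTop (𝓝 0) := by
        have := tendsto_finset_sum (Finset.univ : Finset (Fin n))
          (fun j _ => (hdiff0 j).abs)
        simpa using this
      have := (h1.const_mul C2).add hsum.tendsto_atTop_zero
      simpa using this
    have hft : Tendsto (fun ℓ => y p i - (A p).mulVec (U ℓ) i) atTop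
        (𝓝 (y p i - (A p).mulVec L i)) := tendsto_const_nhds.sub (hAconv p i)
    exact le_of_tendsto_of_tendsto' hft hgt hle
  -- L is a Bellman solution
  have hBell : IsBellmanSol A y L := by
    intro i
    constructor
    · rintro x ⟨p, rfl⟩
      exact hub p i
    · intro b hb
      have hsle : ∀ ℓ, y (Pc ℓ) i - (A (Pc ℓ)).mulVec L i ≤ b := fun ℓ =>
        hb ⟨Pc ℓ, rfl⟩
      have hst : Tendsto (fun ℓ => y (Pc ℓ) i - (A (Pc ℓ)).mulVec L i) atTop (𝓝 0) := by
        have hnorm : ∀ ℓ, ‖y (Pc ℓ) i - (A (Pc ℓ)).mulVec L i‖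
            ≤ C2 * ∑ j, |U (ℓ+1) j - L j| := by
          intro ℓ
          have h2 : y (Pc ℓ) i = (A (Pc ℓ)).mulVec (U (ℓ+1)) i := by rw [hsolve ℓ]
          rw [Real.norm_eq_abs, h2, hmvdiff]
          calc |∑ j, A (Pc ℓ) i j * (U (ℓ+1) j - L j)|
              ≤ ∑ j, |A (Pc ℓ) i j * (U (ℓ+1) j - L j)| := Finset.abs_sum_le_sum_abs _ _
            _ ≤ ∑ j, C2 * |U (ℓ+1) j - L j| := by
                apply Finset.sum_le_sum
                intro j _
                rw [abs_mul]
                exact mul_le_mul_of_nonneg_right ((hC2 _).1 i j) (abs_nonneg _)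
            _ = C2 * ∑ j, |U (ℓ+1) j - L j| := (Finset.mul_sum _ _ _).symm
        have htz : Tendsto (fun ℓ => C2 * ∑ j, |U (ℓ+1) j - L j|) atTop (𝓝 0) := by
          have h1 : ∀ j : Fin n, Tendsto (fun ℓ => |U (ℓ+1) j - L j|) atTop (𝓝 0) := by
            intro j
            have := (hL1 j).sub (tendsto_const_nhds (x := L j))
            simpa using this.abs
          have := tendsto_finset_sum (Finset.univ : Finset (Fin n)) (fun j _ => h1 j)
          simpa using this.const_mul C2
        exact squeeze_zero_norm hnorm htz
      exact le_of_tendsto' hst hsle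
  -- uniqueness: any two solutions are pointwise ≤
  have huniq : ∀ V W, IsBellmanSol A y V → IsBellmanSol A y W → ∀ i, V i ≤ W i := by
    intro V W hV hW i
    have key : ∀ δ : ℝ, 0 < δ → V i - W i ≤ K * δ := by
      intro δ hδ
      have hex : ∀ j : Fin n, ∃ p, -δ < y p j - (A p).mulVec V j := by
        intro j
        by_contra hcon
        push_neg at hcon
        have h0 : (0 : ℝ) ≤ -δ := (hV j).2 (by rintro x ⟨p, rfl⟩; exact hcon p)
        linarith
      choose ps hps using hex
      set pq : ∀ k, P k := fun k => ps k k with hpq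
      have hAeq : ∀ (j : Fin n) (v : Fin n → ℝ),
          (A pq).mulVec v j = (A (ps j)).mulVec v j := by
        intro j v
        have hr := (hrd pq (ps j) j rfl).1
        simp only [Matrix.mulVec, dotProduct]
        exact Finset.sum_congr rfl fun k _ => by rw [hr k]
      have hyeq : ∀ j : Fin n, y pq j = y (ps j) j := fun j => (hrd pq (ps j) j rfl).2
      have hlow : ∀ j, -δ ≤ (A pq).mulVec (W - V) j := by
        intro j
        have ha : -δ < y pq j - (A pq).mulVec V j := by
          rw [hyeq j, hAeq j]; exact hps j
        have hbnd : y pq j - (A pq).mulVec W j ≤ 0 := (hW j).1 ⟨pq, rfl⟩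
        rw [Matrix.mulVec_sub, Pi.sub_apply]
        linarith
      have hkl := keyLB (A pq) (hmono pq) C1 δ (hC1 pq (hmono pq).1) hδ.le _ hlow i
      rw [Pi.sub_apply] at hkl
      have : (n : ℝ) * C1 * δ = K * δ := by rw [hK]
      linarith
    by_contra hlt
    push_neg at hlt
    have hd : 0 < V i - W i := by linarith
    have hKpos : 0 < K + 1 := by linarith
    have hδ : 0 < (V i - W i) / (K + 1) := div_pos hd hKpos
    have hk := key _ hδ
    rw [mul_div_assoc'] at hk
    rw [le_div_iff₀ hKpos] at hk
    nlinarith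
  refine ⟨fun ℓ => (hmono (Pc ℓ)).1, L, hU, hBell, fun V hV => ?_⟩
  funext i
  exact le_antisymm (huniq V L hV hBell i) (huniq L V hBell hV i)
end

section
/- Assume (H1), (H3), and (H4). Then the Bellman problem sup_{P∈𝒫}{−A(P)U + y(P)} = 0 has at most one solution U ∈ ℝⁿ. -/
open Filter Topology Finset

open scoped Classical

set_option linter.unusedSectionVars false

noncomputable section

/-- (H3): every `A(P)` is a WDD Z-matrix with nonnegative diagonal entries whose diagonal
entries are at most `1` on rows that are not SDD. -/
def H3 {n : ℕ} {P : Fin n → Type*}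
    (A : (∀ i, P i) → Matrix (Fin n) (Fin n) ℝ) : Prop :=
  ∀ p, ZMat (A p) ∧ WDD (A p) ∧ (∀ i, 0 ≤ A p i i) ∧
    ∀ i, ¬ SDDRow (A p) i → A p i i ≤ 1

/-- `ŷ(P)ᵢ = y(P)ᵢ` if row `i` of `A(P)` is not SDD, and `−∞` otherwise. -/
def yhat {n : ℕ} {P : Fin n → Type*}
    (A : (∀ i, P i) → Matrix (Fin n) (Fin n) ℝ)
    (y : (∀ i, P i) → (Fin n → ℝ)) (p : ∀ i, P i) (i : Fin n) : EReal :=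
  if SDDRow (A p) i then ⊥ else ((y p i : ℝ) : EReal)

/-- The operator `𝕄U = U + 𝔸U` on vectors with entries in `ℝ ∪ {−∞}`, where
`[𝔸U]ᵢ = sup_P [−A(P)U + ŷ(P)]ᵢ`, computed with the conventions `r + (−∞) = −∞`,
`t·(−∞) = −∞` for `t > 0` and `0·(−∞) = 0`; entrywise this reads
`[𝕄U]ᵢ = sup_P { (1 − A(P)ᵢᵢ)·Uᵢ + Σ_{j≠i} (−A(P)ᵢⱼ)·Uⱼ + ŷ(P)ᵢ }`. -/
def Mbb {n : ℕ} {P : Fin n → Type*}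
    (A : (∀ i, P i) → Matrix (Fin n) (Fin n) ℝ)
    (y : (∀ i, P i) → (Fin n → ℝ)) (U : Fin n → EReal) : Fin n → EReal :=
  fun i => ⨆ p : ∀ i, P i,
    (((1 - A p i i : ℝ) : EReal) * U i
      + ∑ j ∈ Finset.univ.erase i, ((-A p i j : ℝ) : EReal) * U j
      + yhat A y p i)

/-- (H4): consecutive applications of `𝕄` are eventually strictly suboptimal. -/
def H4 {n : ℕ} {P : Fin n → Type*}
    (A : (∀ i, P i) → Matrix (Fin n) (Fin n) ℝ)
    (y : (∀ i, P i) → (Fin n → ℝ)) : Prop :=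
  ∀ (U : Fin n → ℝ) (i : Fin n), ∃ m₁ m₂ : ℕ, m₁ < m₂ ∧
    (Mbb A y)^[m₂] (fun j => ((U j : ℝ) : EReal)) i
      < (Mbb A y)^[m₁] (fun j => ((U j : ℝ) : EReal)) i

/-! ### Auxiliary lemmas -/

lemma ereal_coe_sum {α : Type*} (s : Finset α) (f : α → ℝ) :
    ((∑ j ∈ s, f j : ℝ) : EReal) = ∑ j ∈ s, ((f j : ℝ) : EReal) := by
  induction s using Finset.cons_induction with
  | empty => simp
  | cons a s ha ih => rw [Finset.sum_cons, Finset.sum_cons, EReal.coe_add, ih]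

lemma ereal_mul_mono {c : ℝ} (hc : 0 ≤ c) {x y : EReal} (h : x ≤ y) :
    (c : EReal) * x ≤ (c : EReal) * y :=
  mul_le_mul_of_nonneg_left h (by exact_mod_cast hc)

/-- An entrywise-nonnegativity ("monotone matrix") lemma for weakly chained diagonally
dominant Z-matrices with nonnegative diagonal, where the chains are witnessed by a grading
function `r`. -/
lemma wcdd_nonneg {n : ℕ} (B : Matrix (Fin n) (Fin n) ℝ)
    (hZ : ZMat B) (hW : WDD B) (hdiag : ∀ i, 0 ≤ B i i)
    (r : Fin n → ℕ)
    (hch : ∀ i, SDDRow B i ∨ ∃ j, j ≠ i ∧ B i j ≠ 0 ∧ r j < r i)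
    (x : Fin n → ℝ) (hx : ∀ i, 0 ≤ B.mulVec x i) (i : Fin n) : 0 ≤ x i := by
  by_contra hneg
  push_neg at hneg
  have hne : (Finset.univ : Finset (Fin n)).Nonempty := ⟨i, mem_univ i⟩
  set v := Finset.univ.inf' hne x with hvdef
  have hvle : ∀ j, v ≤ x j := fun j => Finset.inf'_le x (mem_univ j)
  have hvneg : v < 0 := lt_of_le_of_lt (hvle i) hneg
  have hTne : (Finset.univ.filter (fun j => x j = v)).Nonempty := by
    obtain ⟨i0, -, hi0⟩ := Finset.exists_mem_eq_inf' hne x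
    exact ⟨i0, by simp [hvdef, hi0.symm]⟩
  obtain ⟨k, hkT, hkmin⟩ := Finset.exists_min_image _ r hTne
  have hxk : x k = v := (Finset.mem_filter.mp hkT).2
  have hmv : B.mulVec x k = B k k * x k + ∑ j ∈ Finset.univ.erase k, B k j * x j := by
    simp only [Matrix.mulVec, dotProduct]
    exact (Finset.add_sum_erase _ _ (mem_univ k)).symm
  have hterm : ∀ j ∈ Finset.univ.erase k, B k j * x j ≤ B k j * v := fun j hj =>
    mul_le_mul_of_nonpos_left (hvle j) (hZ k j (Ne.symm (Finset.mem_erase.mp hj).1))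
  have habs : ∀ j ∈ Finset.univ.erase k, |B k j| = -(B k j) := fun j hj =>
    abs_of_nonpos (hZ k j (Ne.symm (Finset.mem_erase.mp hj).1))
  set s := ∑ j ∈ Finset.univ.erase k, |B k j| with hsdef
  have hsv : ∑ j ∈ Finset.univ.erase k, B k j * v = -s * v := by
    rw [← Finset.sum_mul]
    congr 1
    rw [hsdef, ← Finset.sum_neg_distrib]
    exact Finset.sum_congr rfl (fun j hj => by rw [habs j hj, neg_neg])
  have hWk : s ≤ B k k := le_trans (hW k) (le_of_eq (abs_of_nonneg (hdiag k)))
  have hnsdd : ¬ SDDRow B k := by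
    intro hsdd
    have h1 : B.mulVec x k ≤ (B k k - s) * v := by
      rw [hmv, hxk]
      calc B k k * v + ∑ j ∈ Finset.univ.erase k, B k j * x j
          ≤ B k k * v + (-s * v) := by
            exact add_le_add (le_refl _) (hsv ▸ Finset.sum_le_sum hterm)
        _ = (B k k - s) * v := by ring
    have hpos : 0 < B k k - s := by
      have h2 := hsdd
      rw [SDDRow, abs_of_nonneg (hdiag k)] at h2
      linarith
    nlinarith [hx k]
  obtain ⟨j0, hj0ne, hj0z, hj0r⟩ := (hch k).resolve_left hnsdd
  have hxj0 : x j0 = v := by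
    by_contra hne'
    have hlt : v < x j0 := lt_of_le_of_ne (hvle j0) (Ne.symm hne')
    have hBneg : B k j0 < 0 := lt_of_le_of_ne (hZ k j0 (Ne.symm hj0ne)) hj0z
    have hstrict : B k j0 * x j0 < B k j0 * v := by nlinarith
    have hsum : ∑ j ∈ Finset.univ.erase k, B k j * x j
        < ∑ j ∈ Finset.univ.erase k, B k j * v :=
      Finset.sum_lt_sum hterm ⟨j0, Finset.mem_erase.mpr ⟨hj0ne, mem_univ _⟩, hstrict⟩
    have h1 : B.mulVec x k < (B k k - s) * v := by
      rw [hmv, hxk]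
      have he : (B k k - s) * v = B k k * v + (-s * v) := by ring
      rw [he]
      linarith [hsum, hsv]
    nlinarith [hx k, hWk, hvneg]
  have : r k ≤ r j0 := hkmin j0 (Finset.mem_filter.mpr ⟨mem_univ _, hxj0⟩)
  omega

section Bellman

variable {n : ℕ} {P : Fin n → Type*}

/-- The increasing family of "good" indices: indices from which a chain of `ε`-optimal
(for `U`) rows leads to an SDD row. -/
def GoodSet (A : (∀ i, P i) → Matrix (Fin n) (Fin n) ℝ) (y : (∀ i, P i) → Fin n → ℝ)
    (U : Fin n → ℝ) (ε : ℝ) : ℕ → Set (Fin n)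
  | 0 => {i | ∃ p, -ε ≤ y p i - (A p).mulVec U i ∧ SDDRow (A p) i}
  | (k+1) => GoodSet A y U ε k ∪
      {i | ∃ p, -ε ≤ y p i - (A p).mulVec U i ∧
        ∃ j, j ≠ i ∧ A p i j ≠ 0 ∧ j ∈ GoodSet A y U ε k}

lemma goodset_spec (A : (∀ i, P i) → Matrix (Fin n) (Fin n) ℝ) (y : (∀ i, P i) → Fin n → ℝ)
    (U : Fin n → ℝ) (ε : ℝ) :
    ∀ {k : ℕ} {i : Fin n}, i ∈ GoodSet A y U ε k →
      ∃ p, -ε ≤ y p i - (A p).mulVec U i ∧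
        (SDDRow (A p) i ∨ ∃ j, j ≠ i ∧ A p i j ≠ 0 ∧ ∃ k', k' < k ∧ j ∈ GoodSet A y U ε k') := by
  intro k
  induction k with
  | zero =>
    intro i hi
    obtain ⟨p, h1, h2⟩ := hi
    exact ⟨p, h1, Or.inl h2⟩
  | succ k ih =>
    intro i hi
    rcases hi with hi | hi
    · obtain ⟨p, h1, h2⟩ := ih hi
      refine ⟨p, h1, ?_⟩
      rcases h2 with h | ⟨j, hne, hnz, k', hk', hj⟩
      · exact Or.inl h
      · exact Or.inr ⟨j, hne, hnz, k', lt_trans hk' (Nat.lt_succ_self k), hj⟩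
    · obtain ⟨p, h1, j, hne, hnz, hj⟩ := hi
      exact ⟨p, h1, Or.inr ⟨j, hne, hnz, k, Nat.lt_succ_self k, hj⟩⟩

variable [∀ i, Nonempty (P i)]
variable (A : (∀ i, P i) → Matrix (Fin n) (Fin n) ℝ) (y : (∀ i, P i) → Fin n → ℝ)

lemma mbb_mono (h3 : H3 A) {z w : Fin n → EReal} (hzw : ∀ j, z j ≤ w j) (i : Fin n) :
    Mbb A y z i ≤ Mbb A y w i := by
  simp only [Mbb]
  refine iSup_mono fun p => ?_
  by_cases hsdd : SDDRow (A p) i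
  · rw [show yhat A y p i = ⊥ from if_pos hsdd, EReal.add_bot]
    exact bot_le
  · refine add_le_add (add_le_add ?_ ?_) le_rfl
    · exact ereal_mul_mono (by linarith [(h3 p).2.2.2 i hsdd]) (hzw i)
    · exact Finset.sum_le_sum fun j hj =>
        ereal_mul_mono (by linarith [(h3 p).1 i j (Ne.symm (Finset.mem_erase.mp hj).1)]) (hzw j)

lemma mbb_le_self {U : Fin n → ℝ} (hU : IsBellmanSol A y U) (i : Fin n) :
    Mbb A y (fun j => ((U j : ℝ) : EReal)) i ≤ ((U i : ℝ) : EReal) := by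
  simp only [Mbb]
  refine iSup_le fun p => ?_
  by_cases hsdd : SDDRow (A p) i
  · rw [show yhat A y p i = ⊥ from if_pos hsdd, EReal.add_bot]
    exact bot_le
  · rw [show yhat A y p i = ((y p i : ℝ) : EReal) from if_neg hsdd]
    have hco : ∀ j ∈ Finset.univ.erase i,
        ((-A p i j : ℝ) : EReal) * ((U j : ℝ) : EReal) = ((-A p i j * U j : ℝ) : EReal) :=
      fun j _ => (EReal.coe_mul _ _).symm
    rw [Finset.sum_congr rfl hco, ← ereal_coe_sum, ← EReal.coe_mul, ← EReal.coe_add,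
      ← EReal.coe_add]
    refine EReal.coe_le_coe_iff.mpr ?_
    have hfeas : y p i - (A p).mulVec U i ≤ 0 := (hU i).1 (Set.mem_range_self p)
    have hexp : (A p).mulVec U i = A p i i * U i + ∑ j ∈ Finset.univ.erase i, A p i j * U j := by
      simp only [Matrix.mulVec, dotProduct]
      exact (Finset.add_sum_erase _ _ (mem_univ i)).symm
    have hneg : ∑ j ∈ Finset.univ.erase i, -A p i j * U j
        = -(∑ j ∈ Finset.univ.erase i, A p i j * U j) := by
      rw [← Finset.sum_neg_distrib]
      exact Finset.sum_congr rfl fun j _ => by ring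
    rw [hneg]
    linarith
  
lemma mbb_iter_le (h3 : H3 A) {U : Fin n → ℝ} (hU : IsBellmanSol A y U) :
    ∀ (m : ℕ) (i : Fin n),
      (Mbb A y)^[m] (fun j => ((U j : ℝ) : EReal)) i ≤ ((U i : ℝ) : EReal) := by
  intro m
  induction m with
  | zero => intro i; simp
  | succ m ih =>
    intro i
    rw [Function.iterate_succ_apply']
    exact le_trans (mbb_mono A y h3 ih i) (mbb_le_self A y hU i)

lemma claimC (h3 : H3 A) {U : Fin n → ℝ} (hU : IsBellmanSol A y U)
    (J : Set (Fin n)) {ε' : ℝ} (hε' : 0 < ε')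
    (hJ : ∀ i ∈ J, ∀ p, -ε' ≤ y p i - (A p).mulVec U i →
      ¬SDDRow (A p) i ∧ ∀ j, j ≠ i → A p i j ≠ 0 → j ∈ J) :
    ∀ m : ℕ, ∀ i ∈ J,
      ((U i - m * ε' : ℝ) : EReal) ≤ (Mbb A y)^[m] (fun j => ((U j : ℝ) : EReal)) i := by
  intro m
  induction m with
  | zero => intro i hi; simp
  | succ m ih =>
    intro i hi
    rw [Function.iterate_succ_apply']
    set z := (Mbb A y)^[m] (fun j => ((U j : ℝ) : EReal)) with hz
    obtain ⟨c, ⟨p0, rfl⟩, hc1, -⟩ := (hU i).exists_between (show -ε' < (0:ℝ) by linarith)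
    have hopt : -ε' ≤ y p0 i - (A p0).mulVec U i := le_of_lt hc1
    obtain ⟨hnsdd, hedge⟩ := hJ i hi p0 hopt
    obtain ⟨hZ, hWDD, hdpos, hd1⟩ := h3 p0
    have habs : ∀ j ∈ Finset.univ.erase i, |A p0 i j| = -(A p0 i j) := fun j hj =>
      abs_of_nonpos (hZ i j (Ne.symm (Finset.mem_erase.mp hj).1))
    have hrowsum : ∑ j ∈ Finset.univ.erase i, (-A p0 i j) = A p0 i i := by
      have h1 : ∑ j ∈ Finset.univ.erase i, |A p0 i j| ≤ A p0 i i :=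
        le_trans (hWDD i) (le_of_eq (abs_of_nonneg (hdpos i)))
      have h2 : ¬(∑ j ∈ Finset.univ.erase i, |A p0 i j| < |A p0 i i|) := hnsdd
      rw [abs_of_nonneg (hdpos i)] at h2
      push_neg at h2
      have h3' : ∑ j ∈ Finset.univ.erase i, |A p0 i j| = A p0 i i := le_antisymm h1 h2
      rw [← h3']
      exact Finset.sum_congr rfl fun j hj => (habs j hj).symm
    have hexp : (A p0).mulVec U i
        = A p0 i i * U i + ∑ j ∈ Finset.univ.erase i, A p0 i j * U j := by
      simp only [Matrix.mulVec, dotProduct]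
      exact (Finset.add_sum_erase _ _ (mem_univ i)).symm
    set R : ℝ := (1 - A p0 i i) * (U i - m * ε')
      + (∑ j ∈ Finset.univ.erase i, (-A p0 i j) * (U j - m * ε')) + y p0 i with hR
    have hRge : U i - (m + 1 : ℕ) * ε' ≤ R := by
      have hsplit : ∑ j ∈ Finset.univ.erase i, (-A p0 i j) * (U j - m * ε')
          = (∑ j ∈ Finset.univ.erase i, (-A p0 i j) * U j)
            - (∑ j ∈ Finset.univ.erase i, (-A p0 i j)) * (m * ε') := by
        rw [Finset.sum_mul, ← Finset.sum_sub_distrib]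
        exact Finset.sum_congr rfl fun j _ => by ring
      have hnegs : ∑ j ∈ Finset.univ.erase i, (-A p0 i j) * U j
          = -(∑ j ∈ Finset.univ.erase i, A p0 i j * U j) := by
        rw [← Finset.sum_neg_distrib]
        exact Finset.sum_congr rfl fun j _ => by ring
      rw [hR, hsplit, hrowsum, hnegs]
      push_cast
      linarith [hopt, hexp.le, hexp.ge]
    have hstep : ((R : ℝ) : EReal)
        ≤ ((1 - A p0 i i : ℝ) : EReal) * z i
          + ∑ j ∈ Finset.univ.erase i, ((-A p0 i j : ℝ) : EReal) * z j
          + yhat A y p0 i := by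
      rw [show yhat A y p0 i = ((y p0 i : ℝ) : EReal) from if_neg hnsdd]
      rw [hR, EReal.coe_add, EReal.coe_add, EReal.coe_mul, ereal_coe_sum]
      refine add_le_add (add_le_add ?_ ?_) le_rfl
      · exact ereal_mul_mono (by linarith [hd1 i hnsdd]) (ih i hi)
      · refine Finset.sum_le_sum fun j hj => ?_
        rw [EReal.coe_mul]
        by_cases h0 : A p0 i j = 0
        · simp [h0]
        · exact ereal_mul_mono (neg_nonneg.mpr (hZ i j (Ne.symm (Finset.mem_erase.mp hj).1)))
            (ih j (hedge j (Finset.mem_erase.mp hj).1 h0))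
    calc ((U i - (m + 1 : ℕ) * ε' : ℝ) : EReal) ≤ ((R : ℝ) : EReal) :=
          EReal.coe_le_coe_iff.mpr hRge
      _ ≤ _ := hstep
      _ ≤ Mbb A y z i := by
          simp only [Mbb]
          exact le_iSup (fun p => ((1 - A p i i : ℝ) : EReal) * z i
            + ∑ j ∈ Finset.univ.erase i, ((-A p i j : ℝ) : EReal) * z j + yhat A y p i) p0

lemma bad_case (h3 : H3 A) (h4 : H4 A y) {U : Fin n → ℝ} (hU : IsBellmanSol A y U)
    {ε : ℝ} (hε : 0 < ε) {i0 : Fin n} (hi0 : ∀ k, i0 ∉ GoodSet A y U ε k) : False := by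
  set J : Set (Fin n) := {i | ∀ k, i ∉ GoodSet A y U ε k} with hJdef
  have hi0J : i0 ∈ J := hi0
  have hJprop : ∀ ε'', 0 < ε'' → ε'' ≤ ε → ∀ i ∈ J, ∀ p,
      -ε'' ≤ y p i - (A p).mulVec U i →
      ¬SDDRow (A p) i ∧ ∀ j, j ≠ i → A p i j ≠ 0 → j ∈ J := by
    intro ε'' _ hle i hiJ p hopt'
    have hopt : -ε ≤ y p i - (A p).mulVec U i := le_trans (by linarith) hopt'
    refine ⟨fun hsdd => hiJ 0 ⟨p, hopt, hsdd⟩, fun j hne hnz => ?_⟩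
    intro k hjk
    exact hiJ (k+1) (Or.inr ⟨p, hopt, j, hne, hnz, hjk⟩)
  obtain ⟨m1, m2, hm12, hdrop⟩ := h4 U i0
  have hiter := mbb_iter_le A y h3 hU
  have hle2 : (Mbb A y)^[m2] (fun j => ((U j : ℝ) : EReal)) i0 < ((U i0 : ℝ) : EReal) :=
    lt_of_lt_of_le hdrop (hiter m1 i0)
  set t := (Mbb A y)^[m2] (fun j => ((U j : ℝ) : EReal)) i0 with htdef
  have hclaim : ∀ ε'', 0 < ε'' → ε'' ≤ ε → ((U i0 - m2 * ε'' : ℝ) : EReal) ≤ t :=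
    fun ε'' h1 h2 => claimC A y h3 hU J h1 (hJprop ε'' h1 h2) m2 i0 hi0J
  have htop : t ≠ ⊤ := ne_top_of_lt hle2
  by_cases hbot : t = ⊥
  · have := hclaim ε hε le_rfl
    rw [hbot, le_bot_iff] at this
    exact EReal.coe_ne_bot _ this
  · set t' := t.toReal with ht'def
    have ht' : ((t' : ℝ) : EReal) = t := EReal.coe_toReal htop hbot
    have ht'lt : t' < U i0 := by
      rw [← ht'] at hle2
      exact_mod_cast hle2
    have hm2pos : (0:ℝ) < (m2 : ℝ) := by
      have : 0 < m2 := lt_of_le_of_lt (Nat.zero_le m1) hm12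
      exact_mod_cast this
    set d := U i0 - t' with hd
    have hdpos : 0 < d := by rw [hd]; linarith
    set ε'' := min ε (d / (2 * m2)) with hε''def
    have hε''pos : 0 < ε'' := lt_min hε (by positivity)
    have h1 := hclaim ε'' hε''pos (min_le_left _ _)
    rw [← ht'] at h1
    have hreal : U i0 - m2 * ε'' ≤ t' := EReal.coe_le_coe_iff.mp h1
    have h2 : (m2:ℝ) * ε'' ≤ (m2:ℝ) * (d/(2*m2)) :=
      mul_le_mul_of_nonneg_left (min_le_right _ _) (le_of_lt hm2pos)
    have h3' : (m2:ℝ) * (d/(2*m2)) = d/2 := by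
      field_simp
    linarith

lemma bellman_le (hn : 1 ≤ n)
    (hrd : RowDecoupled A y) (h1 : H1 A) (h3 : H3 A) (h4 : H4 A y)
    (U V : Fin n → ℝ) (hU : IsBellmanSol A y U) (hV : IsBellmanSol A y V) (i : Fin n) :
    U i ≤ V i := by
  obtain ⟨C, hC⟩ := h1
  have key : ∀ ε : ℝ, 0 < ε → U i - V i ≤ (n * (max C 0)) * ε := by
    intro ε hε
    by_cases hG : ∀ i', ∃ k, i' ∈ GoodSet A y U ε k
    · -- good case
      set r : Fin n → ℕ := fun i' => Nat.find (hG i') with hr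
      have hspec : ∀ i', ∃ p, -ε ≤ y p i' - (A p).mulVec U i' ∧
          (SDDRow (A p) i' ∨ ∃ j, j ≠ i' ∧ A p i' j ≠ 0 ∧ r j < r i') := by
        intro i'
        obtain ⟨p, hopt, hstr⟩ := goodset_spec A y U ε (Nat.find_spec (hG i'))
        refine ⟨p, hopt, ?_⟩
        rcases hstr with h | ⟨j, hne, hnz, k', hk', hj⟩
        · exact Or.inl h
        · exact Or.inr ⟨j, hne, hnz, lt_of_le_of_lt (Nat.find_min' (hG j) hj) hk'⟩
      choose pf hopt hstr using hspec
      set q : ∀ j, P j := fun j => pf j j with hq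
      have hrow : ∀ i', (∀ j, A (pf i') i' j = A q i' j) ∧ y (pf i') i' = y q i' :=
        fun i' => hrd (pf i') q i' rfl
      set B := A q with hB
      obtain ⟨hZ, hWDD, hdiag, hdiag1⟩ := h3 q
      have hrmul : ∀ (x : Fin n → ℝ) i', (A (pf i')).mulVec x i' = B.mulVec x i' := by
        intro x i'
        simp only [Matrix.mulVec, dotProduct]
        exact Finset.sum_congr rfl fun j _ => by rw [(hrow i').1 j]
      have hBopt : ∀ i', -ε ≤ y q i' - B.mulVec U i' := by
        intro i'
        rw [← (hrow i').2, ← hrmul U i']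
        exact hopt i'
      have hsddtrans : ∀ i', SDDRow (A (pf i')) i' ↔ SDDRow B i' := by
        intro i'
        unfold SDDRow
        rw [show ∑ j ∈ Finset.univ.erase i', |A (pf i') i' j|
            = ∑ j ∈ Finset.univ.erase i', |B i' j| from
          Finset.sum_congr rfl fun j _ => by rw [(hrow i').1 j], (hrow i').1 i']
      have hch : ∀ i', SDDRow B i' ∨ ∃ j, j ≠ i' ∧ B i' j ≠ 0 ∧ r j < r i' := by
        intro i'
        rcases hstr i' with h | ⟨j, hne, hnz, hrlt⟩
        · exact Or.inl ((hsddtrans i').mp h)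
        · exact Or.inr ⟨j, hne, by rw [← (hrow i').1 j]; exact hnz, hrlt⟩
      have hmono := wcdd_nonneg B hZ hWDD hdiag r hch
      have hdet : B.det ≠ 0 := by
        intro h0
        obtain ⟨v, hv0, hvz⟩ := Matrix.exists_mulVec_eq_zero_iff.mpr h0
        apply hv0
        funext j
        have ha1 : 0 ≤ v j := hmono v (fun i'' => by rw [hvz]; simp) j
        have ha2 : 0 ≤ -v j := hmono (-v) (fun i'' => by rw [Matrix.mulVec_neg, hvz]; simp) j
        have : v j = 0 := le_antisymm (by linarith) ha1
        simpa using this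
      have hunit : IsUnit B.det := isUnit_iff_ne_zero.mpr hdet
      have hCb := hC q hunit
      have hinv : ∀ i' j, 0 ≤ B⁻¹ i' j := by
        intro i' j
        refine hmono (fun l => B⁻¹ l j) (fun l => ?_) i'
        have hcol : B.mulVec (fun l => B⁻¹ l j) l = (B * B⁻¹) l j := by
          simp [Matrix.mulVec, dotProduct, Matrix.mul_apply]
        rw [hcol, Matrix.mul_nonsing_inv B hunit]
        by_cases h : l = j <;> simp [Matrix.one_apply, h]
      set W : Fin n → ℝ := fun j => U j - V j with hW
      have hBW : ∀ j, B.mulVec W j ≤ ε := by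
        intro j
        have hfv : y q j - B.mulVec V j ≤ 0 := (hV j).1 (Set.mem_range_self q)
        have hWe : B.mulVec W j = B.mulVec U j - B.mulVec V j := by
          have : W = U - V := rfl
          rw [this, Matrix.mulVec_sub]
          rfl
        rw [hWe]
        linarith [hBopt j]
      have hWrep : W i = ∑ j, B⁻¹ i j * B.mulVec W j := by
        have hrec : B⁻¹.mulVec (B.mulVec W) = W := by
          rw [Matrix.mulVec_mulVec, Matrix.nonsing_inv_mul B hunit, Matrix.one_mulVec]
        conv_lhs => rw [← hrec]
        simp [Matrix.mulVec, dotProduct]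
      calc U i - V i = W i := rfl
        _ = ∑ j, B⁻¹ i j * B.mulVec W j := hWrep
        _ ≤ ∑ _j : Fin n, max C 0 * ε := by
            refine Finset.sum_le_sum fun j _ => ?_
            have ht1 : B⁻¹ i j * B.mulVec W j ≤ B⁻¹ i j * ε :=
              mul_le_mul_of_nonneg_left (hBW j) (hinv i j)
            have ht2 : B⁻¹ i j ≤ max C 0 :=
              le_trans (le_abs_self _) (le_trans (hCb i j) (le_max_left _ _))
            nlinarith [hε.le]
        _ = (n * max C 0) * ε := by
            rw [Finset.sum_const, Finset.card_univ, Fintype.card_fin, nsmul_eq_mul]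
            ring
    · push_neg at hG
      obtain ⟨i0, hi0⟩ := hG
      exact absurd (bad_case A y h3 h4 hU hε fun k => (hi0 k)) (fun h => h)
  by_contra hlt
  push_neg at hlt
  set K := (n : ℝ) * max C 0 with hK
  have hK0 : 0 ≤ K := mul_nonneg (Nat.cast_nonneg n) (le_max_right C 0)
  set d := U i - V i with hd
  have hdpos : 0 < d := by rw [hd]; linarith
  have h := key (d / (K + 1)) (by positivity)
  have h2 : K * (d / (K + 1)) = K * d / (K + 1) := by ring
  rw [h2, le_div_iff₀ (by linarith)] at h
  nlinarith

end Bellman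

/-- Under (H1), (H3) and (H4), the Bellman problem has at most one solution. -/
theorem bellman_solution_unique
    {n : ℕ} (hn : 1 ≤ n) {P : Fin n → Type*} [∀ i, Nonempty (P i)]
    (A : (∀ i, P i) → Matrix (Fin n) (Fin n) ℝ) (y : (∀ i, P i) → Fin n → ℝ)
    (hrd : RowDecoupled A y) (h1 : H1 A) (h3 : H3 A) (h4 : H4 A y)
    (U V : Fin n → ℝ) (hU : IsBellmanSol A y U) (hV : IsBellmanSol A y V) :
    U = V := by
  funext i
  exact le_antisymm (bellman_le A y hn hrd h1 h3 h4 U V hU hV i)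
    (bellman_le A y hn hrd h1 h3 h4 V U hV hU i)
end
end

section
/- Assume (H1). Let U ∈ ℝⁿ be a solution of the Bellman problem sup_{P∈𝒫}{−A(P)U + y(P)} = 0 and let Û ∈ ℝⁿ be any vector. Suppose there exists a sequence (Pℓ)_{ℓ≥1} in 𝒫 such that A(Pℓ) is monotone for each ℓ and −A(Pℓ)Û + y(Pℓ) → 0 entrywise as ℓ → ∞. Then U ≥ Û entrywise. -/
open Filter Topology

/-- Under (H1): if `U` solves the Bellman problem, `Û` is any vector, and there is a
sequence of controls `Pℓ` with `A(Pℓ)` monotone and `−A(Pℓ)Û + y(Pℓ) → 0` entrywise,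
then `U ≥ Û` entrywise. -/
theorem bellman_one_side
    {n : ℕ} (hn : 1 ≤ n) {P : Fin n → Type*} [∀ i, Nonempty (P i)]
    (A : (∀ i, P i) → Matrix (Fin n) (Fin n) ℝ) (y : (∀ i, P i) → Fin n → ℝ)
    (hrd : RowDecoupled A y) (h1 : H1 A)
    (U : Fin n → ℝ) (hU : IsBellmanSol A y U) (Uhat : Fin n → ℝ)
    (Pc : ℕ → ∀ i, P i) (hmono : ∀ ℓ, MatMono (A (Pc ℓ)))
    (hconv : ∀ i, Tendsto (fun ℓ => y (Pc ℓ) i - (A (Pc ℓ)).mulVec Uhat i) atTop (𝓝 0)) :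
    ∀ i, Uhat i ≤ U i := by
  obtain ⟨C, hC⟩ := h1
  have hC0 : 0 ≤ C :=
    le_trans (abs_nonneg _) (hC (Pc 0) (hmono 0).1 ⟨0, hn⟩ ⟨0, hn⟩)
  intro i
  set ε : ℕ → Fin n → ℝ := fun ℓ j => y (Pc ℓ) j - (A (Pc ℓ)).mulVec Uhat j with hε
  have key : ∀ ℓ, Uhat i - U i ≤ C * ∑ j, |ε ℓ j| := by
    intro ℓ
    obtain ⟨hdet, hinv⟩ := hmono ℓ
    have hAU : ∀ j, y (Pc ℓ) j - (A (Pc ℓ)).mulVec U j ≤ 0 := fun j =>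
      (hU j).1 ⟨Pc ℓ, rfl⟩
    have hlow : ∀ j, ε ℓ j ≤ (A (Pc ℓ)).mulVec (U - Uhat) j := by
      intro j
      have hsub : (A (Pc ℓ)).mulVec (U - Uhat) j
          = (A (Pc ℓ)).mulVec U j - (A (Pc ℓ)).mulVec Uhat j := by
        simp [Matrix.mulVec_sub]
      have := hAU j
      rw [hsub]
      simp only [hε]
      linarith
    have hid : (U - Uhat) = (A (Pc ℓ))⁻¹.mulVec ((A (Pc ℓ)).mulVec (U - Uhat)) := by
      rw [Matrix.mulVec_mulVec, Matrix.nonsing_inv_mul _ hdet, Matrix.one_mulVec]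
    have hsum : U i - Uhat i = ∑ j, (A (Pc ℓ))⁻¹ i j * (A (Pc ℓ)).mulVec (U - Uhat) j := by
      have h := congrFun hid i
      simpa [Matrix.mulVec, dotProduct, Matrix.mulVec_sub] using h
    have hterm : ∀ j : Fin n, -(C * |ε ℓ j|) ≤ (A (Pc ℓ))⁻¹ i j * (A (Pc ℓ)).mulVec (U - Uhat) j := by
      intro j
      have h1 : (A (Pc ℓ))⁻¹ i j * ε ℓ j ≤ (A (Pc ℓ))⁻¹ i j * (A (Pc ℓ)).mulVec (U - Uhat) j :=
        mul_le_mul_of_nonneg_left (hlow j) (hinv i j)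
      have h2 : -(C * |ε ℓ j|) ≤ (A (Pc ℓ))⁻¹ i j * ε ℓ j := by
        have habs : |(A (Pc ℓ))⁻¹ i j * ε ℓ j| ≤ C * |ε ℓ j| := by
          rw [abs_mul]
          exact mul_le_mul_of_nonneg_right (hC (Pc ℓ) hdet i j) (abs_nonneg _)
        linarith [neg_abs_le ((A (Pc ℓ))⁻¹ i j * ε ℓ j)]
      linarith
    have hge : -(C * ∑ j, |ε ℓ j|) ≤ U i - Uhat i := by
      rw [hsum, Finset.mul_sum, ← Finset.sum_neg_distrib]
      exact Finset.sum_le_sum fun j _ => hterm j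
    linarith
  have hlim : Tendsto (fun ℓ => C * ∑ j, |ε ℓ j|) atTop (𝓝 0) := by
    have hsum : Tendsto (fun ℓ => ∑ j, |ε ℓ j|) atTop (𝓝 0) := by
      have : Tendsto (fun ℓ => ∑ j, |ε ℓ j|) atTop (𝓝 (∑ j : Fin n, (0:ℝ))) :=
        tendsto_finset_sum _ fun j _ => by simpa using (hconv j).abs
      simpa using this
    simpa using hsum.const_mul C
  have : Uhat i - U i ≤ 0 := ge_of_tendsto' hlim key
  linarith
end

section
/- Let M ≥ 0 be an integer, let x_0, …, x_M ∈ ℝ be arbitrary grid points, and let κ ≥ 0, c > 0, β ≥ 0, and τ ∈ ℝ. For U ∈ ℝ^{M+1} define the discretized intervention operator (𝓜U)ᵢ = max_{0≤j≤M} { U_j − e^{−βτ}( κ|x_j − x_i| + c ) }. Then for every U ∈ ℝ^{M+1} and every 0 ≤ i ≤ M, (𝓜(𝓜U))ᵢ ≤ (𝓜U)ᵢ − e^{−βτ}·c; in particular (𝓜²U)ᵢ < (𝓜U)ᵢ, so two consecutive applications of the intervention operator are strictly suboptimal. -/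
/-- Discretized intervention operator for the FEX rate problem:
`(𝓜U)ᵢ = max_j { U_j − e^{−βτ}(κ|x_j − x_i| + c) }`. -/
noncomputable def Mo (M : ℕ) (x : Fin (M + 1) → ℝ) (κ c β τ : ℝ)
    (U : Fin (M + 1) → ℝ) (i : Fin (M + 1)) : ℝ :=
  ⨆ j, (U j - Real.exp (-(β * τ)) * (κ * |x j - x i| + c))

/-- Two consecutive applications of the discretized intervention operator are strictly
suboptimal: `(𝓜²U)ᵢ ≤ (𝓜U)ᵢ − e^{−βτ}·c < (𝓜U)ᵢ`. -/
theorem consecutive_impulses_suboptimal (M : ℕ) (x : Fin (M + 1) → ℝ)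
    (κ c β τ : ℝ) (hκ : 0 ≤ κ) (hc : 0 < c) (hβ : 0 ≤ β)
    (U : Fin (M + 1) → ℝ) (i : Fin (M + 1)) :
    Mo M x κ c β τ (Mo M x κ c β τ U) i
        ≤ Mo M x κ c β τ U i - Real.exp (-(β * τ)) * c ∧
      Mo M x κ c β τ (Mo M x κ c β τ U) i < Mo M x κ c β τ U i := by
  set E := Real.exp (-(β * τ)) with hEdef
  have hE : 0 < E := Real.exp_pos _
  have hbdd : ∀ (V : Fin (M + 1) → ℝ) (k : Fin (M + 1)),
      BddAbove (Set.range fun j => V j - E * (κ * |x j - x k| + c)) :=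
    fun V k => Set.Finite.bddAbove (Set.finite_range _)
  -- key estimate: Mo U j ≤ Mo U i + E * κ * |x j - x i|
  have key : ∀ j, Mo M x κ c β τ U j ≤ Mo M x κ c β τ U i + E * (κ * |x j - x i|) := by
    intro j
    refine ciSup_le fun k => ?_
    have h1 : U k - E * (κ * |x k - x i| + c) ≤ Mo M x κ c β τ U i :=
      le_ciSup (hbdd U i) k
    have htri : |x k - x j| ≥ |x k - x i| - |x j - x i| := by
      have := abs_sub_abs_le_abs_sub (x k - x i) (x k - x j)
      have h2 : (x k - x i) - (x k - x j) = x j - x i := by ring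
      rw [h2] at this
      linarith [abs_nonneg (x j - x i)]
    nlinarith [abs_nonneg (x k - x j), abs_nonneg (x j - x i), mul_nonneg hE.le hκ]
  have hle : Mo M x κ c β τ (Mo M x κ c β τ U) i ≤ Mo M x κ c β τ U i - E * c := by
    refine ciSup_le fun j => ?_
    have := key j
    nlinarith [abs_nonneg (x j - x i)]
  exact ⟨hle, lt_of_le_of_lt hle (by nlinarith)⟩
end

section
/- Let T > 0, let W be a nonempty compact metric space, let a, b : ℝ × W → ℝ be continuous functions satisfying |a(x,w) − a(y,w)| + |b(x,w) − b(y,w)| ≤ L|x − y| for all x, y ∈ ℝ and w ∈ W (L a constant not depending on w), and let f : [0,T] × ℝ × W → ℝ be continuous. Define H(t, x, p, A) = −sup_{w∈W}[ (1/2) b(x,w)² A + a(x,w) p + f(t,x,w) ]. Then there exists a constant C > 0 such that for every compact set D ⊆ ℝ there exists a modulus of continuity ϖ such that for all t, s ∈ [0,T], x, y ∈ D, X, Y ∈ ℝ, α > 0, and ε > 0 satisfying the 2×2 positive-semidefinite matrix inequality [[X, 0],[0, −Y]] ≼ 3α·[[1, −1],[−1, 1]], one has H(s, y, α(x−y) −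 εy, Y − ε) − H(t, x, α(x−y) + εx, X + ε) ≤ C·( α|x−y|² + ε(1 + |x|² + |y|²) ) + ϖ(|(t,x) − (s,y)|). -/
open Filter Topology Set

/-- The non-impulse (HJB) part of the HJBQVI operator:
`H(t,x,p,A) = −sup_{w∈W}[ (1/2) b(x,w)² A + a(x,w) p + f(t,x,w) ]`. -/
noncomputable def Ham {W : Type*} (a b : ℝ → W → ℝ) (f : ℝ → ℝ → W → ℝ)
    (t x p A : ℝ) : ℝ :=
  -(⨆ w, ((1 : ℝ) / 2) * b x w ^ 2 * A + a x w * p + f t x w)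

set_option maxHeartbeats 1600000 in
/-- Structural estimate on the Hamiltonian needed for the Crandall–Ishii doubling
argument: there is a constant `C > 0` such that for every compact `D ⊆ ℝ` there is a
modulus of continuity `ϖ` with
`H(s,y,α(x−y)−εy,Y−ε) − H(t,x,α(x−y)+εx,X+ε)
  ≤ C(α|x−y|² + ε(1+|x|²+|y|²)) + ϖ(|(t,x)−(s,y)|)`
whenever `[[X,0],[0,−Y]] ≼ 3α[[1,−1],[−1,1]]`. -/
theorem hamiltonian_doubling_estimate (T : ℝ) (hT : 0 < T)
    {W : Type*} [MetricSpace W] [CompactSpace W] [Nonempty W]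
    (a b : ℝ → W → ℝ)
    (ha : Continuous fun p : ℝ × W => a p.1 p.2)
    (hb : Continuous fun p : ℝ × W => b p.1 p.2)
    (L : ℝ)
    (hLip : ∀ x y w, |a x w - a y w| + |b x w - b y w| ≤ L * |x - y|)
    (f : ℝ → ℝ → W → ℝ)
    (hf : Continuous fun p : ℝ × ℝ × W => f p.1 p.2.1 p.2.2) :
    ∃ C > (0 : ℝ), ∀ D : Set ℝ, IsCompact D →
      ∃ ϖ : ℝ → ℝ, (∀ r, 0 ≤ ϖ r) ∧ MonotoneOn ϖ (Set.Ici 0) ∧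
        Tendsto ϖ (𝓝[>] 0) (𝓝 0) ∧
        ∀ t s : ℝ, t ∈ Set.Icc 0 T → s ∈ Set.Icc 0 T →
          ∀ x y : ℝ, x ∈ D → y ∈ D → ∀ X Y α ε : ℝ, 0 < α → 0 < ε →
            Matrix.PosSemidef (!![3 * α - X, -(3 * α); -(3 * α), 3 * α + Y]) →
            Ham a b f s y (α * (x - y) - ε * y) (Y - ε)
                - Ham a b f t x (α * (x - y) + ε * x) (X + ε)
              ≤ C * (α * |x - y| ^ 2 + ε * (1 + |x| ^ 2 + |y| ^ 2))
                + ϖ (Real.sqrt ((t - s) ^ 2 + (x - y) ^ 2)) := by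
  obtain ⟨w0⟩ := ‹Nonempty W›
  -- continuity in w, for fixed other arguments
  have haw : ∀ z : ℝ, Continuous fun w => a z w := fun z => ha.comp (Continuous.prodMk_right z)
  have hbw : ∀ z : ℝ, Continuous fun w => b z w := fun z => hb.comp (Continuous.prodMk_right z)
  have hfw : ∀ (u z : ℝ), Continuous fun w => f u z w := fun u z =>
    hf.comp (continuous_const.prodMk (continuous_const.prodMk continuous_id))
  -- L is nonnegative
  have hL0 : 0 ≤ L := by
    have h := hLip 1 0 w0
    have h1 : (0:ℝ) ≤ |a 1 w0 - a 0 w0| + |b 1 w0 - b 0 w0| := by positivity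
    simpa using h1.trans h
  -- bounds at the origin
  obtain ⟨A₀, hA₀⟩ : ∃ A, ∀ w, |a 0 w| ≤ A := by
    obtain ⟨A, hA⟩ := (isCompact_range ((haw 0).abs)).bddAbove
    exact ⟨A, fun w => hA ⟨w, rfl⟩⟩
  obtain ⟨B₀, hB₀⟩ : ∃ B, ∀ w, |b 0 w| ≤ B := by
    obtain ⟨B, hB⟩ := (isCompact_range ((hbw 0).abs)).bddAbove
    exact ⟨B, fun w => hB ⟨w, rfl⟩⟩
  have hA0 : 0 ≤ A₀ := le_trans (abs_nonneg _) (hA₀ w0)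
  have hB0 : 0 ≤ B₀ := le_trans (abs_nonneg _) (hB₀ w0)
  -- Lipschitz bounds split
  have haL : ∀ x y w, |a x w - a y w| ≤ L * |x - y| := fun x y w =>
    le_trans (le_add_of_nonneg_right (abs_nonneg _)) (hLip x y w)
  have hbL : ∀ x y w, |b x w - b y w| ≤ L * |x - y| := fun x y w =>
    le_trans (le_add_of_nonneg_left (abs_nonneg _)) (hLip x y w)
  have haB : ∀ x w, |a x w| ≤ A₀ + L * |x| := by
    intro x w
    have := haL x 0 w
    have h2 := abs_sub_abs_le_abs_sub (a x w) (a 0 w)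
    simp only [sub_zero] at this
    have := hA₀ w
    linarith
  have hbB : ∀ x w, |b x w| ≤ B₀ + L * |x| := by
    intro x w
    have := hbL x 0 w
    have h2 := abs_sub_abs_le_abs_sub (b x w) (b 0 w)
    simp only [sub_zero] at this
    have := hB₀ w
    linarith
  refine ⟨1 + 2 * L ^ 2 + 2 * L + 2 * B₀ ^ 2 + 2 * A₀, by positivity, ?_⟩
  intro D hD
  rcases D.eq_empty_or_nonempty with rfl | ⟨d0, hd0⟩
  · exact ⟨fun _ => 0, fun _ => le_refl 0, fun _ _ _ _ _ => le_refl 0,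
      tendsto_const_nhds, fun _ _ _ _ _ _ hx => absurd hx (notMem_empty _)⟩
  · -- the compact parameter set
    set K : Set (ℝ × ℝ × W) := (Icc 0 T) ×ˢ (D ×ˢ (univ : Set W)) with hK
    have hKc : IsCompact K := isCompact_Icc.prod (hD.prod isCompact_univ)
    set g : ℝ × ℝ × W → ℝ := fun p => f p.1 p.2.1 p.2.2 with hg
    obtain ⟨M, hM⟩ := hKc.exists_bound_of_continuousOn hf.continuousOn
    -- the modulus set
    set S : ℝ → Set ℝ := fun r =>
      {u | ∃ t ∈ Icc (0:ℝ) T, ∃ s ∈ Icc (0:ℝ) T, ∃ x ∈ D, ∃ y ∈ D, ∃ w : W,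
        Real.sqrt ((t - s) ^ 2 + (x - y) ^ 2) ≤ r ∧ u = |f t x w - f s y w|} with hS
    have hSb : ∀ r, BddAbove (S r) := by
      intro r
      refine ⟨2 * M, fun u hu => ?_⟩
      obtain ⟨t, ht, s, hs, x, hx, y, hy, w, -, rfl⟩ := hu
      have h1 : ‖g (t, x, w)‖ ≤ M := hM _ ⟨ht, hx, mem_univ _⟩
      have h2 : ‖g (s, y, w)‖ ≤ M := hM _ ⟨hs, hy, mem_univ _⟩
      simp only [hg, Real.norm_eq_abs] at h1 h2
      calc |f t x w - f s y w| ≤ |f t x w| + |f s y w| := abs_sub _ _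
        _ ≤ 2 * M := by linarith
    have hS0 : ∀ r, 0 ≤ r → (0:ℝ) ∈ S r := by
      intro r hr
      refine ⟨0, by constructor <;> [rfl; exact hT.le], 0, by constructor <;> [rfl; exact hT.le],
        d0, hd0, d0, hd0, w0, ?_, by simp⟩
      simpa using hr
    have hSne : ∀ r, 0 ≤ r → (S r).Nonempty := fun r hr => ⟨0, hS0 r hr⟩
    refine ⟨fun r => sSup (S r), ?_, ?_, ?_, ?_⟩
    · -- nonneg
      intro r
      rcases le_or_gt 0 r with hr | hr
      · exact le_csSup (hSb r) (hS0 r hr)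
      · show (0:ℝ) ≤ sSup (S r)
        have hemp : S r = ∅ := by
          ext u
          simp only [mem_empty_iff_false, iff_false]
          rintro ⟨t, -, s, -, x, -, y, -, w, hle, -⟩
          exact absurd (le_trans (Real.sqrt_nonneg _) hle) (not_le.mpr hr)
        rw [hemp, Real.sSup_empty]
    · -- monotone
      intro r1 hr1 r2 _ h12
      refine csSup_le_csSup (hSb r2) (hSne r1 hr1) ?_
      rintro u ⟨t, ht, s, hs, x, hx, y, hy, w, hle, rfl⟩
      exact ⟨t, ht, s, hs, x, hx, y, hy, w, hle.trans h12, rfl⟩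
    · -- tendsto 0
      rw [Metric.tendsto_nhdsWithin_nhds]
      intro δ hδ
      have hUC := hKc.uniformContinuousOn_of_continuous hf.continuousOn
      obtain ⟨η, hη, hUC2⟩ := Metric.uniformContinuousOn_iff.mp hUC (δ / 2) (half_pos hδ)
      refine ⟨η, hη, fun r hr hrd => ?_⟩
      have hr0 : 0 < r := hr
      rw [Real.dist_eq, sub_zero, abs_of_pos hr0] at hrd
      have hub : sSup (S r) ≤ δ / 2 := by
        refine csSup_le (hSne r hr0.le) ?_
        rintro u ⟨t, ht, s, hs, x, hx, y, hy, w, hle, rfl⟩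
        have hp1 : (t, x, w) ∈ K := ⟨ht, hx, mem_univ _⟩
        have hp2 : (s, y, w) ∈ K := ⟨hs, hy, mem_univ _⟩
        have hdist : dist ((t, x, w) : ℝ × ℝ × W) (s, y, w) < η := by
          have h1 : |t - s| ≤ Real.sqrt ((t - s) ^ 2 + (x - y) ^ 2) := by
            rw [← Real.sqrt_sq_eq_abs]
            exact Real.sqrt_le_sqrt (by nlinarith [sq_nonneg (x - y)])
          have h2 : |x - y| ≤ Real.sqrt ((t - s) ^ 2 + (x - y) ^ 2) := by
            rw [← Real.sqrt_sq_eq_abs]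
            exact Real.sqrt_le_sqrt (by nlinarith [sq_nonneg (t - s)])
          have : dist ((t, x, w) : ℝ × ℝ × W) (s, y, w)
              = max (dist t s) (max (dist x y) (dist w w)) := by
            rw [Prod.dist_eq, Prod.dist_eq]
          rw [this, dist_self, Real.dist_eq, Real.dist_eq]
          calc max |t - s| (max |x - y| 0)
              ≤ Real.sqrt ((t - s) ^ 2 + (x - y) ^ 2) := by
                apply max_le h1 (max_le h2 (Real.sqrt_nonneg _))
            _ ≤ r := hle
            _ < η := hrd
        have := hUC2 _ hp1 _ hp2 hdist
        rw [Real.dist_eq] at this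
        exact this.le
      have hlb : 0 ≤ sSup (S r) := le_csSup (hSb r) (hS0 r hr0.le)
      rw [Real.dist_eq, sub_zero, abs_of_nonneg hlb]
      linarith
    · -- the main estimate
      intro t s ht hs x y hx hy X Y α ε hα hε hPSD
      set r := Real.sqrt ((t - s) ^ 2 + (x - y) ^ 2) with hr
      set C : ℝ := 1 + 2 * L ^ 2 + 2 * L + 2 * B₀ ^ 2 + 2 * A₀ with hC
      -- bound on the f-difference
      have hfd : ∀ w, f t x w - f s y w ≤ sSup (S r) := by
        intro w
        refine le_trans (le_abs_self _) (le_csSup (hSb r) ?_)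
        exact ⟨t, ht, s, hs, x, hx, y, hy, w, le_rfl, rfl⟩
      -- matrix inequality
      have hq : ∀ w, X * (b x w) ^ 2 - Y * (b y w) ^ 2
          ≤ 3 * α * (b x w - b y w) ^ 2 := by
        intro w
        have h2 := hPSD.dotProduct_mulVec_nonneg ![b x w, b y w]
        simp [Matrix.mulVec, dotProduct, Fin.sum_univ_two] at h2
        nlinarith [h2]
      -- the two suprema
      set G : W → ℝ := fun w =>
        (1:ℝ)/2 * b y w ^ 2 * (Y - ε) + a y w * (α * (x - y) - ε * y) + f s y w with hG
      have hGc : Continuous G := by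
        refine Continuous.add (Continuous.add ?_ ?_) (hfw s y)
        · exact (continuous_const.mul ((hbw y).pow 2)).mul continuous_const
        · exact (haw y).mul continuous_const
      have hGb : BddAbove (range G) := (isCompact_range hGc).bddAbove
      -- pointwise estimate
      have key : ∀ w, (1:ℝ)/2 * b x w ^ 2 * (X + ε) + a x w * (α * (x - y) + ε * x) + f t x w
          ≤ G w + (C * (α * (x - y) ^ 2 + ε * (1 + x ^ 2 + y ^ 2)) + sSup (S r)) := by
        intro w
        set bx := b x w; set byw := b y w; set ax := a x w; set ay := a y w
        -- squared bounds
        have h1 : (bx - byw) ^ 2 ≤ L ^ 2 * (x - y) ^ 2 := by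
          have h := hbL x y w
          nlinarith [abs_nonneg (bx - byw), sq_abs (bx - byw), sq_abs (x - y),
            mul_self_le_mul_self (abs_nonneg (bx - byw)) h]
        have h2 : (ax - ay) * (x - y) ≤ L * (x - y) ^ 2 := by
          have h := haL x y w
          calc (ax - ay) * (x - y) ≤ |(ax - ay) * (x - y)| := le_abs_self _
            _ = |ax - ay| * |x - y| := abs_mul _ _
            _ ≤ (L * |x - y|) * |x - y| :=
                mul_le_mul_of_nonneg_right h (abs_nonneg _)
            _ = L * (x - y) ^ 2 := by rw [mul_assoc, ← sq_abs (x - y)]; ring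
        have h3x : bx ^ 2 ≤ 2 * B₀ ^ 2 + 2 * L ^ 2 * x ^ 2 := by
          have h := hbB x w
          nlinarith [abs_nonneg bx, abs_nonneg x, sq_abs bx, sq_abs x,
            mul_self_le_mul_self (abs_nonneg bx) h, sq_nonneg (B₀ - L * |x|)]
        have h3y : byw ^ 2 ≤ 2 * B₀ ^ 2 + 2 * L ^ 2 * y ^ 2 := by
          have h := hbB y w
          nlinarith [abs_nonneg byw, abs_nonneg y, sq_abs byw, sq_abs y,
            mul_self_le_mul_self (abs_nonneg byw) h, sq_nonneg (B₀ - L * |y|)]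
        have h4gen : ∀ z : ℝ, ∀ az : ℝ, |az| ≤ A₀ + L * |z| →
            az * z ≤ A₀ / 2 + (A₀ / 2 + L) * z ^ 2 := by
          intro z az h
          have habs : az * z ≤ |az| * |z| := le_trans (le_abs_self _) (abs_mul az z).le
          have step : az * z ≤ (A₀ + L * |z|) * |z| :=
            le_trans habs (mul_le_mul_of_nonneg_right h (abs_nonneg z))
          have hzz : |z| * |z| = z ^ 2 := by rw [← sq_abs z]; ring
          have hz1 : |z| ≤ (1 + z ^ 2) / 2 := by
            nlinarith [sq_nonneg (|z| - 1), sq_abs z]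
          have hA1 : A₀ * |z| ≤ A₀ * ((1 + z ^ 2) / 2) :=
            mul_le_mul_of_nonneg_left hz1 hA0
          nlinarith [step, hzz, hA1, hL0]
        have h4x : ax * x ≤ A₀ / 2 + (A₀ / 2 + L) * x ^ 2 := h4gen x ax (haB x w)
        have h4y : ay * y ≤ A₀ / 2 + (A₀ / 2 + L) * y ^ 2 := h4gen y ay (haB y w)
        -- premultiplied versions
        have P1 : α * ((bx - byw) ^ 2) ≤ α * (L ^ 2 * (x - y) ^ 2) :=
          mul_le_mul_of_nonneg_left h1 hα.le
        have P2 : α * ((ax - ay) * (x - y)) ≤ α * (L * (x - y) ^ 2) :=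
          mul_le_mul_of_nonneg_left h2 hα.le
        have P3x : ε * (bx ^ 2) ≤ ε * (2 * B₀ ^ 2 + 2 * L ^ 2 * x ^ 2) :=
          mul_le_mul_of_nonneg_left h3x hε.le
        have P3y : ε * (byw ^ 2) ≤ ε * (2 * B₀ ^ 2 + 2 * L ^ 2 * y ^ 2) :=
          mul_le_mul_of_nonneg_left h3y hε.le
        have P4x : ε * (ax * x) ≤ ε * (A₀ / 2 + (A₀ / 2 + L) * x ^ 2) :=
          mul_le_mul_of_nonneg_left h4x hε.le
        have P4y : ε * (ay * y) ≤ ε * (A₀ / 2 + (A₀ / 2 + L) * y ^ 2) :=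
          mul_le_mul_of_nonneg_left h4y hε.le
        have P5 := hq w
        have P6 := hfd w
        -- nonnegativity of the slack monomials
        have q0 : (0:ℝ) ≤ α * (x - y) ^ 2 := by positivity
        have e0 : (0:ℝ) ≤ ε := hε.le
        have ex0 : (0:ℝ) ≤ ε * x ^ 2 := by positivity
        have ey0 : (0:ℝ) ≤ ε * y ^ 2 := by positivity
        have n1 : (0:ℝ) ≤ L * (α * (x - y) ^ 2) := mul_nonneg hL0 q0
        have n2 : (0:ℝ) ≤ L ^ 2 * (α * (x - y) ^ 2) := mul_nonneg (by positivity) q0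
        have n3 : (0:ℝ) ≤ A₀ * (α * (x - y) ^ 2) := mul_nonneg hA0 q0
        have n4 : (0:ℝ) ≤ B₀ ^ 2 * (α * (x - y) ^ 2) := mul_nonneg (by positivity) q0
        have n5 : (0:ℝ) ≤ L * ε := mul_nonneg hL0 e0
        have n6 : (0:ℝ) ≤ L ^ 2 * ε := mul_nonneg (by positivity) e0
        have n7 : (0:ℝ) ≤ A₀ * ε := mul_nonneg hA0 e0
        have n8 : (0:ℝ) ≤ B₀ ^ 2 * ε := mul_nonneg (by positivity) e0
        have n9 : (0:ℝ) ≤ L * (ε * x ^ 2) := mul_nonneg hL0 ex0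
        have n10 : (0:ℝ) ≤ L ^ 2 * (ε * x ^ 2) := mul_nonneg (by positivity) ex0
        have n11 : (0:ℝ) ≤ A₀ * (ε * x ^ 2) := mul_nonneg hA0 ex0
        have n12 : (0:ℝ) ≤ B₀ ^ 2 * (ε * x ^ 2) := mul_nonneg (by positivity) ex0
        have n13 : (0:ℝ) ≤ L * (ε * y ^ 2) := mul_nonneg hL0 ey0
        have n14 : (0:ℝ) ≤ L ^ 2 * (ε * y ^ 2) := mul_nonneg (by positivity) ey0
        have n15 : (0:ℝ) ≤ A₀ * (ε * y ^ 2) := mul_nonneg hA0 ey0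
        have n16 : (0:ℝ) ≤ B₀ ^ 2 * (ε * y ^ 2) := mul_nonneg (by positivity) ey0
        simp only [hG, hC]
        linarith [P1, P2, P3x, P3y, P4x, P4y, P5, P6, q0, e0, ex0, ey0,
          n1, n2, n3, n4, n5, n6, n7, n8, n9, n10, n11, n12, n13, n14, n15, n16]
      -- conclude via suprema
      have hsup : (⨆ w, (1:ℝ)/2 * b x w ^ 2 * (X + ε) + a x w * (α * (x - y) + ε * x) + f t x w)
          ≤ (⨆ w, G w) + (C * (α * (x - y) ^ 2 + ε * (1 + x ^ 2 + y ^ 2)) + sSup (S r)) := by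
        refine ciSup_le fun w => ?_
        exact le_trans (key w) (add_le_add_left (le_ciSup hGb w) _)
      simp only [Ham, hG] at hsup ⊢
      simp only [sq_abs]
      linarith [hsup]
end
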